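/- In an abelian category equipped with a monoidal structure whose tensor product is right exact in each variable, if p : B → I is an epimorphism onto the monoidal unit I, then the canonical map (p ⊗ id, id ⊗ p) : B ⊗ B → B ×_I B into the pullback of p along itself is an epimorphism. -/

import Mathlib

/-!
STATEMENT 2: in an abelian monoidal category whose tensor product is right
exact in each variable, for an epimorphism `p : B → I` onto the unit, the
canonical comparison map `B ⊗ B → B ×_I B` (induced by `p ⊗ id` and `id ⊗ p`
composed with the unitors) is an epimorphism.
-/

open CategoryTheory CategoryTheory.Limits CategoryTheory.MonoidalCategory

theorem epi_tensor_to_pullback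
    {C : Type u} [Category.{v} C] [Abelian C] [MonoidalCategory C]
    -- tensoring is right exact in each variable
    [∀ X : C, PreservesFiniteColimits (tensorLeft X)]
    [∀ X : C, PreservesFiniteColimits (tensorRight X)]
    {B : C} (p : B ⟶ 𝟙_ C) [Epi p]
    -- `h` is the canonical map `B ⊗ B → B ×_I B` induced by
    -- `p ⊗ id : B ⊗ B → I ⊗ B ≅ B` and `id ⊗ p : B ⊗ B → B ⊗ I ≅ B`
    (h : (B ⊗ B : C) ⟶ pullback p p)
    (h₁ : h ≫ pullback.fst p p = (p ▷ B) ≫ (λ_ B).hom)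
    (h₂ : h ≫ pullback.snd p p = (B ◁ p) ≫ (ρ_ B).hom) :
    Epi h := by
  -- zero morphisms are preserved by whiskering (tensoring is right exact,
  -- hence preserves the initial = zero object)
  have hz : ∀ (X Y Z : C), ((0 : X ⟶ Y) ▷ Z) = 0 := by
    intro X Y Z
    open ZeroObject in
    have h0 : IsInitial ((0 : C) ⊗ Z) :=
      IsInitial.isInitialObj (tensorRight Z) _ (isZero_zero C).isInitial
    open ZeroObject in
    have hy : (((0 : (0 : C) ⟶ Y)) ▷ Z) = 0 := h0.hom_ext _ _
    open ZeroObject in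
    calc (0 : X ⟶ Y) ▷ Z
        = ((0 : X ⟶ (0 : C)) ≫ 0) ▷ Z := by rw [zero_comp]
      _ = ((0 : X ⟶ (0 : C)) ▷ Z) ≫ ((0 : (0 : C) ⟶ Y) ▷ Z) := by
          rw [comp_whiskerRight]
      _ = 0 := by rw [hy, comp_zero]
  -- the section `s : kernel p ⟶ pullback p p` with components `(0, kernel.ι p)`
  have hk0 : (0 : kernel p ⟶ B) ≫ p = kernel.ι p ≫ p := by simp
  -- `ι := kernel.ι (pullback.fst p p)` factors through `s`
  have hms : (kernel.ι (pullback.fst p p) ≫ pullback.snd p p) ≫ p = 0 := by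
    rw [Category.assoc, ← pullback.condition, ← Category.assoc,
      kernel.condition, zero_comp]
  have hmk : kernel.lift p (kernel.ι (pullback.fst p p) ≫ pullback.snd p p) hms ≫
      kernel.ι p = kernel.ι (pullback.fst p p) ≫ pullback.snd p p :=
    kernel.lift_ι _ _ _
  have hms' : kernel.lift p (kernel.ι (pullback.fst p p) ≫ pullback.snd p p) hms ≫
      pullback.lift 0 (kernel.ι p) hk0 = kernel.ι (pullback.fst p p) := by
    apply pullback.hom_ext
    · simp [pullback.lift_fst]
    · simp [hmk, pullback.lift_snd]
  -- `t' := (kernel p ◁ p) ≫ (ρ_ _).hom` is epi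
  have ht'epi : Epi ((kernel p ◁ p) ≫ (ρ_ (kernel p)).hom) := by
    have : Epi (kernel p ◁ p) := by
      have : Epi ((tensorLeft (kernel p)).map p) := inferInstance
      simpa [tensorLeft] using this
    exact epi_comp _ _
  -- key identity
  have key : (kernel.ι p ▷ B) ≫ h =
      ((kernel p ◁ p) ≫ (ρ_ (kernel p)).hom) ≫ pullback.lift 0 (kernel.ι p) hk0 := by
    apply pullback.hom_ext
    · rw [Category.assoc, h₁, ← comp_whiskerRight_assoc, kernel.condition, hz,
        zero_comp]
      simp [pullback.lift_fst]
    · rw [Category.assoc, h₂, ← whisker_exchange_assoc]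
      simp [pullback.lift_snd]
  -- the cokernel projection of `h` is zero
  apply Preadditive.epi_of_cokernel_zero
  have hsc : pullback.lift 0 (kernel.ι p) hk0 ≫ cokernel.π h = 0 := by
    have := ht'epi
    rw [← cancel_epi ((kernel p ◁ p) ≫ (ρ_ (kernel p)).hom), ← Category.assoc, ← key,
      Category.assoc, cokernel.condition, comp_zero, comp_zero]
  have hιc : kernel.ι (pullback.fst p p) ≫ cokernel.π h = 0 := by
    rw [← hms', Category.assoc, hsc, comp_zero]
  -- descend along the epi `pullback.fst`
  have hfd : pullback.fst p p ≫ Abelian.epiDesc (pullback.fst p p) (cokernel.π h) hιc =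
      cokernel.π h := Abelian.comp_epiDesc _ _ _
  have hd0 : Abelian.epiDesc (pullback.fst p p) (cokernel.π h) hιc = 0 := by
    have hhe : Epi (h ≫ pullback.fst p p) := by
      rw [h₁]
      have : Epi (p ▷ B) := by
        have : Epi ((tensorRight B).map p) := inferInstance
        simpa [tensorRight] using this
      exact epi_comp _ _
    rw [← cancel_epi (h ≫ pullback.fst p p), Category.assoc, hfd,
      cokernel.condition, comp_zero]
  rw [← hfd, hd0, comp_zero]
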